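/- Let f : ℝ^n → ℝ ∪ {+∞} be proper, lower semicontinuous, coercive, and uniformly quasiconvex with modulus φ on a closed convex set C ⊆ dom f. Let p > 2, set σ̂_p = (1/2)^{(3p−2)/2}, and suppose φ(t) ≥ ρ_p t^p for all t ≥ 0, where ρ_p > 0. Let {x^k}_{k≥0} be a HiPPA sequence for f on C with order p and parameters γ_k ∈ (γ_min, γ_max) where γ_min > 1/ρ_p, and let x̄ be the unique global minimizer of f on C. Then the convergence is linear: for every k ≥ 0, ‖x̄ − x^{k+1}‖ ≤ ( p/(p·γ_min·ρ_p + σ̂_p) )^{1/(p−1)}·‖x̄ − x^k‖, and ( p/(p·γ_min·ρ_p + σ̂_p) )^{1/(p−1)} < 1. -/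

import Mathlib

noncomputable section

open Set Filter

/-- `φ : [0,∞) → [0,∞]` is a modulus: increasing and vanishing only at `0`. -/
def IsModulus (φ : ℝ → EReal) : Prop :=
  (∀ ⦃s t : ℝ⦄, 0 ≤ s → s ≤ t → φ s ≤ φ t) ∧ φ 0 = 0 ∧ (∀ t : ℝ, 0 < t → 0 < φ t)

/-- `f` is uniformly quasiconvex on `C` with modulus `φ`. -/
def UnifQuasiconvexOn {E : Type*} [NormedAddCommGroup E] [NormedSpace ℝ E]
    (C : Set E) (φ : ℝ → EReal) (f : E → EReal) : Prop :=
  ∀ ⦃x⦄, x ∈ C → ∀ ⦃y⦄, y ∈ C → ∀ ⦃l : ℝ⦄, l ∈ Set.Icc (0 : ℝ) 1 →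
    f (l • x + (1 - l) • y) + ((l * (1 - l) : ℝ) : EReal) * φ ‖x - y‖ ≤ max (f x) (f y)

/-- `f(x) → +∞` as `‖x‖ → +∞`. -/
def Coercive {E : Type*} [NormedAddCommGroup E] (f : E → EReal) : Prop :=
  ∀ M : ℝ, ∃ R : ℝ, ∀ x : E, R ≤ ‖x‖ → (M : EReal) < f x

/-- The high-order proximal set `prox_{f,γ}^p(C, x) = argmin_{y ∈ C} (f(y) + (1/(pγ))‖x − y‖^p)`. -/
def HOProx {E : Type*} [NormedAddCommGroup E]
    (f : E → EReal) (C : Set E) (p γ : ℝ) (x : E) : Set E :=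
  {y | y ∈ C ∧ ∀ z ∈ C,
    f y + ((1 / (p * γ) * ‖x - y‖ ^ p : ℝ) : EReal)
      ≤ f z + ((1 / (p * γ) * ‖x - z‖ ^ p : ℝ) : EReal)}

private lemma alg_aux {E M : ℝ} (h : ∀ l : ℝ, l ∈ Set.Ioo (0:ℝ) 1 → (1 - l) * E ≤ l * M) :
    E ≤ 0 := by
  by_contra hE
  push_neg at hE
  have habs : 0 ≤ |M| := abs_nonneg M
  have hT : 0 < E + |M| + 1 := by linarith
  set l := E / (2 * (E + |M| + 1)) with hl
  have hl0 : 0 < l := by positivity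
  have hl1 : l < 1/2 := by
    rw [hl, div_lt_iff₀ (by linarith)]
    nlinarith
  have h1 := h l ⟨hl0, by linarith⟩
  have hlM : l * M ≤ l * |M| := mul_le_mul_of_nonneg_left (le_abs_self M) hl0.le
  have hlabs : l * |M| ≤ E / 2 := by
    rw [hl, div_mul_eq_mul_div, div_le_div_iff₀ (by linarith) (by norm_num)]
    nlinarith
  nlinarith

private lemma rpow_sub_rpow_le' {A B q : ℝ} (hA : 0 ≤ A) (hAB : A ≤ B) (hq : 1 ≤ q) :
    B ^ q - A ^ q ≤ q * B ^ (q - 1) * (B - A) := by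
  rcases eq_or_lt_of_le (hA.trans hAB) with hB | hB
  · have hB0 : B = 0 := hB.symm
    have hA0 : A = 0 := le_antisymm (hB0 ▸ hAB) hA
    simp [hA0, hB0, Real.zero_rpow (by linarith : q ≠ 0)]
  · have hs : -1 ≤ A / B - 1 := by
      have : 0 ≤ A / B := div_nonneg hA hB.le
      linarith
    have hber := one_add_mul_self_le_rpow_one_add hs hq
    rw [show 1 + (A / B - 1) = A / B by ring] at hber
    rw [Real.div_rpow hA hB.le q] at hber
    have hBq : 0 < B ^ q := Real.rpow_pos_of_pos hB q
    have key := mul_le_mul_of_nonneg_left hber hBq.le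
    rw [mul_div_cancel₀ _ (ne_of_gt hBq)] at key
    rw [Real.rpow_sub_one (ne_of_gt hB) q]
    have : B ^ q * (1 + q * (A / B - 1)) = B ^ q - q * (B ^ q / B) * (B - A) := by
      field_simp
      ring
    rw [this] at key
    linarith

private lemma scalar_aux {p x σ : ℝ} (hp : 2 < p) (hx : 1 < x)
    (hσ : σ = ((1:ℝ)/2) ^ ((3*p-2)/2)) :
    (x + σ / p) ^ (p/(p-1)) ≤ x ^ (p/(p-1)) + p * x := by
  have hσpos : 0 < σ := hσ ▸ Real.rpow_pos_of_pos (by norm_num) _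
  have hσlt : σ < 1/4 := by
    have h2 : ((1:ℝ)/2) ^ ((3*p-2)/2) < ((1:ℝ)/2) ^ (2:ℝ) :=
      Real.rpow_lt_rpow_of_exponent_gt (by norm_num) (by norm_num) (by linarith)
    have h3 : ((1:ℝ)/2) ^ (2:ℝ) = 1/4 := by
      rw [show (2:ℝ) = ((2:ℕ):ℝ) by norm_num, Real.rpow_natCast]; norm_num
    rw [hσ]; linarith [h3 ▸ h2]
  have hp1 : 0 < p - 1 := by linarith
  have hq1 : 1 < p/(p-1) := by rw [lt_div_iff₀ hp1]; linarith
  have hq2 : p/(p-1) ≤ 2 := by rw [div_le_iff₀ hp1]; linarith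
  have hεpos : 0 < σ / p := div_pos hσpos (by linarith)
  have hεsmall : σ / p ≤ 1/8 := by
    rw [div_le_iff₀ (by linarith : (0:ℝ) < p)]; nlinarith
  have hmain := rpow_sub_rpow_le' (le_of_lt (lt_trans one_pos hx))
    (by linarith : x ≤ x + σ/p) hq1.le
  rw [show x + σ/p - x = σ/p by ring] at hmain
  have hbase1 : (1:ℝ) ≤ x + σ/p := by linarith
  have hexp : (x + σ/p) ^ (p/(p-1) - 1) ≤ (x + σ/p) ^ (1:ℝ) :=
    Real.rpow_le_rpow_of_exponent_le hbase1 (by linarith)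
  rw [Real.rpow_one] at hexp
  have hq0 : 0 < p/(p-1) := by linarith
  have hfin : p/(p-1) * (x + σ/p) ^ (p/(p-1) - 1) * (σ/p) ≤ p * x := by
    have h1 : p/(p-1) * (x + σ/p) ^ (p/(p-1) - 1) * (σ/p) ≤ p/(p-1) * (x + σ/p) * (σ/p) := by
      apply mul_le_mul_of_nonneg_right _ hεpos.le
      exact mul_le_mul_of_nonneg_left hexp hq0.le
    have h2 : p/(p-1) * (x + σ/p) * (σ/p) ≤ 2 * (x + σ/p) * (σ/p) := by
      apply mul_le_mul_of_nonneg_right _ hεpos.le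
      apply mul_le_mul_of_nonneg_right hq2 (by linarith)
    have h3 : 2 * (x + σ/p) * (σ/p) ≤ 2 * (2*x) * (1/8) := by
      apply mul_le_mul (by nlinarith) hεsmall hεpos.le (by nlinarith)
    nlinarith
  linarith

private lemma step_C {p X σ a d δ : ℝ} (hp : 2 < p) (hX : 1 < X)
    (hσ : σ = ((1:ℝ)/2) ^ ((3*p-2)/2))
    (ha : 0 ≤ a) (hd : 0 < d) (hδ : 0 ≤ δ)
    (hI : a ^ p + p * X * d ^ p ≤ δ ^ p)
    (hII : X * d ^ (p - 1) ≤ a ^ (p - 1)) :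
    d ≤ (p / (p * X + σ)) ^ (1/(p-1)) * δ := by
  have hσpos : 0 < σ := hσ ▸ Real.rpow_pos_of_pos (by norm_num) _
  have hp0 : 0 < p := by linarith
  have hp1 : 0 < p - 1 := by linarith
  have hq0 : 0 < p/(p-1) := by positivity
  have hppow : (p - 1) * (p/(p-1)) = p := by field_simp
  have hap : a ^ p = (a ^ (p-1)) ^ (p/(p-1)) := by
    rw [← Real.rpow_mul ha, hppow]
  have hdp : (d ^ (p-1) : ℝ) ^ (p/(p-1)) = d ^ p := by
    rw [← Real.rpow_mul hd.le, hppow]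
  have h1 : X ^ (p/(p-1)) * d ^ p ≤ a ^ p := by
    rw [hap, ← hdp, ← Real.mul_rpow (by linarith : (0:ℝ) ≤ X) (Real.rpow_nonneg hd.le _)]
    exact Real.rpow_le_rpow (by positivity) hII hq0.le
  have hY1 : 1 < X + σ/p := by
    have : 0 < σ / p := by positivity
    linarith
  have h2 : (X + σ/p) ^ (p/(p-1)) * d ^ p ≤ δ ^ p := by
    have hs := scalar_aux hp hX hσ
    have h4 : (X + σ/p) ^ (p/(p-1)) * d ^ p ≤ (X ^ (p/(p-1)) + p * X) * d ^ p :=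
      mul_le_mul_of_nonneg_right hs (Real.rpow_nonneg hd.le p)
    nlinarith
  have hYq : 0 ≤ (X + σ/p) ^ (p/(p-1)) * d ^ p := by positivity
  have h3 : ((X + σ/p) ^ (p/(p-1)) * d ^ p) ^ (1/p) ≤ (δ ^ p) ^ (1/p) :=
    Real.rpow_le_rpow hYq h2 (by positivity)
  have hδp : (δ ^ p) ^ (1/p) = δ := by
    rw [← Real.rpow_mul hδ, mul_one_div, div_self (ne_of_gt hp0), Real.rpow_one]
  have hlhs : ((X + σ/p) ^ (p/(p-1)) * d ^ p) ^ (1/p) = (X + σ/p) ^ (1/(p-1)) * d := by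
    rw [Real.mul_rpow (Real.rpow_nonneg (by linarith) _) (Real.rpow_nonneg hd.le _),
      ← Real.rpow_mul (by linarith : (0:ℝ) ≤ X + σ/p), ← Real.rpow_mul hd.le,
      show (p/(p-1)) * (1/p) = 1/(p-1) by rw [mul_one_div, div_right_comm, div_self hp0.ne'],
      show p * (1/p) = 1 by field_simp, Real.rpow_one]
  rw [hδp, hlhs] at h3
  have hYr : 0 < (X + σ/p) ^ (1/(p-1)) := Real.rpow_pos_of_pos (by linarith) _
  have hfrac : p / (p * X + σ) = (X + σ/p)⁻¹ := by
    rw [inv_eq_one_div, div_eq_div_iff (by positivity) (by positivity)]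
    field_simp
  rw [hfrac, Real.inv_rpow (by linarith : (0:ℝ) ≤ X + σ/p), ← div_eq_inv_mul,
    le_div_iff₀ hYr]
  linarith [h3]

set_option maxHeartbeats 1000000 in
/-- **Linear convergence for `p > 2`.**  Let `p > 2`,
`σ̂_p = (1/2)^((3p−2)/2)`, and suppose `φ(t) ≥ ρ_p t^p` for all `t ≥ 0` with `ρ_p > 0`.
For a HiPPA sequence of order `p` with `γ_min > 1/ρ_p` and the unique global minimizer
`x̄`: `‖x̄ − x^{k+1}‖ ≤ (p/(p·γ_min·ρ_p + σ̂_p))^{1/(p−1)}·‖x̄ − x^k‖` for all `k`, and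
the factor is `< 1`. -/
theorem statement_18 (n : ℕ) (f : EuclideanSpace ℝ (Fin n) → EReal)
    (hproper : ∃ x, f x ≠ ⊤) (hbot : ∀ x, f x ≠ ⊥)
    (hlsc : LowerSemicontinuous f) (hcoer : Coercive f)
    (C : Set (EuclideanSpace ℝ (Fin n)))
    (hCclosed : IsClosed C) (hCconv : Convex ℝ C)
    (hdom : ∀ x ∈ C, f x ≠ ⊤)
    (φ : ℝ → EReal) (hφ : IsModulus φ)
    (hquasi : UnifQuasiconvexOn C φ f)
    (p : ℝ) (hp : 2 < p)
    (ρp : ℝ) (hρp : 0 < ρp)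
    (hlb : ∀ t : ℝ, 0 ≤ t → ((ρp * t ^ p : ℝ) : EReal) ≤ φ t)
    (γmin γmax : ℝ) (hγmin : 1 / ρp < γmin) (hγ : γmin < γmax)
    (x : ℕ → EuclideanSpace ℝ (Fin n)) (γ : ℕ → ℝ)
    (hx0 : x 0 ∈ C)
    (hγk : ∀ k, γ k ∈ Set.Ioo γmin γmax)
    (hstep : ∀ k, x (k + 1) ∈ HOProx f C p (γ k) (x k))
    (xb : EuclideanSpace ℝ (Fin n)) (hxbC : xb ∈ C)
    (hxbmin : ∀ y ∈ C, f xb ≤ f y)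
    (hxbuniq : ∀ z ∈ C, (∀ y ∈ C, f z ≤ f y) → z = xb) :
    ((p / (p * γmin * ρp + ((1 : ℝ) / 2) ^ ((3 * p - 2) / 2))) ^ (1 / (p - 1)) < 1) ∧
    ∀ k : ℕ, ‖xb - x (k + 1)‖
      ≤ (p / (p * γmin * ρp + ((1 : ℝ) / 2) ^ ((3 * p - 2) / 2))) ^ (1 / (p - 1))
          * ‖xb - x k‖ := by
  have hp0 : 0 < p := by linarith
  have hp1 : 0 < p - 1 := by linarith
  have hγmin0 : 0 < γmin := lt_trans (by positivity) hγmin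
  have hX : 1 < γmin * ρp := by
    rw [div_lt_iff₀ hρp] at hγmin
    linarith
  set σ := ((1:ℝ)/2) ^ ((3 * p - 2) / 2) with hσdef
  have hσpos : 0 < σ := Real.rpow_pos_of_pos (by norm_num) _
  have hxC : ∀ m, x m ∈ C := by
    intro m
    induction m with
    | zero => exact hx0
    | succ m _ => exact (hstep m).1
  constructor
  · apply Real.rpow_lt_one (by positivity) _ (by positivity)
    rw [div_lt_one (by nlinarith)]
    nlinarith
  · intro k
    rcases eq_or_lt_of_le (norm_nonneg (xb - x (k+1))) with hd0 | hd
    · rw [← hd0]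
      exact mul_nonneg (Real.rpow_nonneg (by positivity) _) (norm_nonneg _)
    · -- main case
      have hγk0 : 0 < γ k := lt_trans hγmin0 (hγk k).1
      set d := ‖xb - x (k+1)‖ with hddef
      set a := ‖x k - x (k+1)‖ with hadef
      set D := ‖xb - x k‖ with hDdef
      have ha0 : 0 ≤ a := norm_nonneg _
      have hD0 : 0 ≤ D := norm_nonneg _
      have hdp0 : 0 ≤ d ^ p := Real.rpow_nonneg hd.le _
      have hKEY : ∀ l ∈ Set.Ioo (0:ℝ) 1,
          l * (1-l) * (p * (γmin * ρp) * d ^ p)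
            ≤ ‖(x k - x (k+1)) - l • (xb - x (k+1))‖ ^ p - a ^ p := by
        intro l hl
        obtain ⟨hl0, hl1⟩ := hl
        have hlpos : 0 < l * (1 - l) := mul_pos hl0 (by linarith)
        have hzC : l • xb + (1 - l) • x (k+1) ∈ C :=
          hCconv hxbC (hxC (k+1)) hl0.le (by linarith) (by ring)
        have h1 := (hstep k).2 (l • xb + (1 - l) • x (k+1)) hzC
        have h2 := hquasi hxbC (hxC (k+1)) (Set.mem_Icc.mpr ⟨hl0.le, hl1.le⟩)
        have hfxn : ((f (x (k+1))).toReal : EReal) = f (x (k+1)) :=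
          EReal.coe_toReal (hdom _ (hxC (k+1))) (hbot _)
        have hfz : ((f (l • xb + (1 - l) • x (k+1))).toReal : EReal)
            = f (l • xb + (1 - l) • x (k+1)) :=
          EReal.coe_toReal (hdom _ hzC) (hbot _)
        have hmax : max (f xb) (f (x (k+1))) = f (x (k+1)) :=
          max_eq_right (hxbmin _ (hxC (k+1)))
        rw [hmax] at h2
        have hφlb := hlb d (norm_nonneg _)
        have hφnebot : φ d ≠ ⊥ := by
          intro h
          rw [h, le_bot_iff] at hφlb
          exact EReal.coe_ne_bot _ hφlb
        have hφnetop : φ d ≠ ⊤ := by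
          intro htop
          rw [hddef] at htop
          rw [htop, EReal.coe_mul_top_of_pos hlpos,
            EReal.add_top_of_ne_bot (hfz ▸ EReal.coe_ne_bot _), top_le_iff] at h2
          exact hdom _ (hxC (k+1)) h2
        have hr : ((φ d).toReal : EReal) = φ d := EReal.coe_toReal hφnetop hφnebot
        rw [hddef] at hr hφlb
        rw [← hfxn, ← hfz, ← hr, ← EReal.coe_mul, ← EReal.coe_add,
          EReal.coe_le_coe_iff] at h2
        rw [← hfxn, ← hfz, ← EReal.coe_add, ← EReal.coe_add, EReal.coe_le_coe_iff] at h1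
        rw [← hddef] at h2
        have hrlb : ρp * d ^ p ≤ (φ d).toReal := by
          rw [← hddef] at hφlb hr
          exact EReal.coe_le_coe_iff.mp (hr ▸ hφlb)
        have hzeq : x k - (l • xb + (1 - l) • x (k+1))
            = (x k - x (k+1)) - l • (xb - x (k+1)) := by
          module
        rw [hzeq] at h1
        set F1 := (f (x (k+1))).toReal
        set F2 := (f (l • xb + (1 - l) • x (k+1))).toReal
        set N := ‖(x k - x (k+1)) - l • (xb - x (k+1))‖ ^ p with hN
        -- h1 : F1 + 1/(p*γ k) * a^p ≤ F2 + 1/(p*γ k) * N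
        -- h2 : F2 + (l*(1-l)) * (φ d).toReal ≤ F1
        have e1 : l * (1-l) * (ρp * d ^ p) ≤ 1/(p * γ k) * (N - a ^ p) := by
          have := mul_le_mul_of_nonneg_left hrlb hlpos.le
          have hexp : 1/(p * γ k) * (N - a ^ p)
              = (F2 + 1/(p * γ k) * N) - (F1 + 1/(p * γ k) * a ^ p) + (F1 - F2) := by
            ring
          rw [hexp]
          nlinarith
        have e2 : (p * γ k) * (1/(p * γ k) * (N - a ^ p)) = N - a ^ p := by
          field_simp
        have hγdiff : 0 ≤ l * (1-l) * (p * ρp * d ^ p) * (γ k - γmin) := by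
          have h5 : 0 ≤ γ k - γmin := by linarith [(hγk k).1]
          have h6 : 0 ≤ l * (1-l) * (p * ρp * d ^ p) := by positivity
          exact mul_nonneg h6 h5
        calc l * (1-l) * (p * (γmin * ρp) * d ^ p)
            ≤ l * (1-l) * (p * (γ k * ρp) * d ^ p) := by nlinarith
          _ = (p * γ k) * (l * (1-l) * (ρp * d ^ p)) := by ring
          _ ≤ (p * γ k) * (1/(p * γ k) * (N - a ^ p)) :=
              mul_le_mul_of_nonneg_left e1 (by positivity)
          _ = N - a ^ p := e2
      -- (I)
      have hDeq : (x k - x (k+1)) - (xb - x (k+1)) = x k - xb := by module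
      have hDnorm : ‖(x k - x (k+1)) - (xb - x (k+1))‖ = D := by
        rw [hDeq, norm_sub_rev]
      have hI : a ^ p + p * (γmin * ρp) * d ^ p ≤ D ^ p := by
        have halg : ∀ l ∈ Set.Ioo (0:ℝ) 1,
            (1-l) * (p * (γmin * ρp) * d ^ p - (D ^ p - a ^ p)) ≤ l * (D ^ p - a ^ p) := by
          intro l hl
          obtain ⟨hl0, hl1⟩ := hl
          have hkey := hKEY l ⟨hl0, hl1⟩
          have hvec : (x k - x (k+1)) - l • (xb - x (k+1))
              = (1-l) • (x k - x (k+1)) + l • ((x k - x (k+1)) - (xb - x (k+1))) := by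
            module
          have hnorm : ‖(x k - x (k+1)) - l • (xb - x (k+1))‖ ≤ (1-l) * a + l * D := by
            rw [hvec]
            calc ‖(1-l) • (x k - x (k+1)) + l • ((x k - x (k+1)) - (xb - x (k+1)))‖
                ≤ ‖(1-l) • (x k - x (k+1))‖ + ‖l • ((x k - x (k+1)) - (xb - x (k+1)))‖ :=
                  norm_add_le _ _
              _ = (1-l) * a + l * D := by
                  rw [norm_smul, norm_smul, Real.norm_of_nonneg (by linarith : (0:ℝ) ≤ 1 - l),
                    Real.norm_of_nonneg hl0.le, hDnorm]
          have hnormp : ‖(x k - x (k+1)) - l • (xb - x (k+1))‖ ^ p ≤ ((1-l) * a + l * D) ^ p :=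
            Real.rpow_le_rpow (norm_nonneg _) hnorm hp0.le
          have hconv : ((1-l) * a + l * D) ^ p ≤ (1-l) * a ^ p + l * D ^ p := by
            have := (convexOn_rpow (by linarith : (1:ℝ) ≤ p)).2
              (Set.mem_Ici.mpr ha0) (Set.mem_Ici.mpr hD0)
              (by linarith : (0:ℝ) ≤ 1 - l) hl0.le (by ring)
            simpa [smul_eq_mul] using this
          have hstep1 : l * ((1-l) * (p * (γmin * ρp) * d ^ p)) ≤ l * (D ^ p - a ^ p) := by
            calc l * ((1-l) * (p * (γmin * ρp) * d ^ p))
                = l * (1-l) * (p * (γmin * ρp) * d ^ p) := by ring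
              _ ≤ ‖(x k - x (k+1)) - l • (xb - x (k+1))‖ ^ p - a ^ p := hkey
              _ ≤ ((1-l) * a ^ p + l * D ^ p) - a ^ p := by linarith [hnormp.trans hconv]
              _ = l * (D ^ p - a ^ p) := by ring
          have hstep2 : (1-l) * (p * (γmin * ρp) * d ^ p) ≤ D ^ p - a ^ p :=
            le_of_mul_le_mul_left hstep1 hl0
          nlinarith
        have := alg_aux halg
        linarith
      -- (II)
      have hII : (γmin * ρp) * d ^ (p-1) ≤ a ^ (p-1) := by
        have hdps : d ^ p = d ^ (p-1) * d := by
          rw [← Real.rpow_add_one (ne_of_gt hd) (p-1), sub_add_cancel]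
        have halg : ∀ l ∈ Set.Ioo (0:ℝ) 1,
            (1-l) * ((γmin * ρp) * d ^ (p-1) - a ^ (p-1)) ≤ l * ((a + d) ^ (p-1)) := by
          intro l hl
          obtain ⟨hl0, hl1⟩ := hl
          have hkey := hKEY l ⟨hl0, hl1⟩
          have hnorm : ‖(x k - x (k+1)) - l • (xb - x (k+1))‖ ≤ a + l * d := by
            calc ‖(x k - x (k+1)) - l • (xb - x (k+1))‖
                ≤ ‖x k - x (k+1)‖ + ‖l • (xb - x (k+1))‖ := norm_sub_le _ _
              _ = a + l * d := by
                  rw [norm_smul, Real.norm_of_nonneg hl0.le]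
          have hnormp : ‖(x k - x (k+1)) - l • (xb - x (k+1))‖ ^ p ≤ (a + l * d) ^ p :=
            Real.rpow_le_rpow (norm_nonneg _) hnorm hp0.le
          have hrp := rpow_sub_rpow_le' ha0 (by nlinarith : a ≤ a + l * d)
            (by linarith : (1:ℝ) ≤ p)
          rw [show a + l * d - a = l * d by ring] at hrp
          have hcancel : (1-l) * ((γmin * ρp) * d ^ (p-1)) ≤ (a + l * d) ^ (p-1) := by
            refine le_of_mul_le_mul_left ?_ (show (0:ℝ) < l * p * d by positivity)
            calc l * p * d * ((1-l) * ((γmin * ρp) * d ^ (p-1)))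
                = l * (1-l) * (p * (γmin * ρp) * (d ^ (p-1) * d)) := by ring
              _ = l * (1-l) * (p * (γmin * ρp) * d ^ p) := by rw [← hdps]
              _ ≤ (a + l * d) ^ p - a ^ p := by linarith [hkey.trans (by linarith [hnormp] : ‖(x k - x (k+1)) - l • (xb - x (k+1))‖ ^ p - a ^ p ≤ (a + l * d) ^ p - a ^ p)]
              _ ≤ p * (a + l * d) ^ (p-1) * (l * d) := hrp
              _ = l * p * d * ((a + l * d) ^ (p-1)) := by ring
          have hconv : (a + l * d) ^ (p-1) ≤ (1-l) * a ^ (p-1) + l * (a + d) ^ (p-1) := by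
            have h7 := (convexOn_rpow (by linarith : (1:ℝ) ≤ p - 1)).2
              (Set.mem_Ici.mpr ha0) (Set.mem_Ici.mpr (by linarith : (0:ℝ) ≤ a + d))
              (by linarith : (0:ℝ) ≤ 1 - l) hl0.le (by ring)
            have h8 : (1-l) • a + l • (a + d) = a + l * d := by simp [smul_eq_mul]; ring
            rw [h8] at h7
            simpa [smul_eq_mul] using h7
          nlinarith
        have := alg_aux halg
        linarith
      -- conclude
      have hfinal := step_C hp hX hσdef ha0 hd hD0 hI hII
      rw [← mul_assoc] at hfinal
      exact hfinal
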